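/- arXiv:2507.14291 — 3 statements merged into one kernel-verified Lean document; each statement's English description precedes it below -/
import Mathlib

section
/- Let a ∈ ℂ with |a| < 1 and c ∈ ℂ with |c| = 1, ac ≠ 1. If Re[(1 - a²c² + c(1-|a|²))·(1-āc̄)²] = 0, then c = -(1-ā)/(1-a). -/
open Complex

theorem extremal_c_formula
    (a c : ℂ) (ha : ‖a‖ < 1) (hc : ‖c‖ = 1) (hac : a * c ≠ 1)
    (hre : ((1 - a^2 * c^2 + c * (1 - (‖a‖:ℂ)^2)) *
      (1 - (starRingEnd ℂ) a * (starRingEnd ℂ) c)^2).re = 0) :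
    c = -(1 - (starRingEnd ℂ) a) / (1 - a) := by
  set A := (starRingEnd ℂ) a with hA
  set C := (starRingEnd ℂ) c with hCdef
  have hc0 : c ≠ 0 := by
    intro h; rw [h] at hc; simp at hc
  have h1 : c * C = 1 := by
    rw [hCdef, Complex.mul_conj', hc]; norm_num
  have hK : ((‖a‖:ℂ))^2 = a * A := by
    rw [hA, Complex.mul_conj']
  have ha1 : (1:ℂ) - a ≠ 0 := by
    intro h
    have : a = 1 := by linear_combination -h
    rw [this] at ha; simp at ha
  have haA : (1:ℂ) - a * A ≠ 0 := by
    intro h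
    have h2 : a * A = 1 := by linear_combination -h
    have : ‖a * A‖ = ‖a‖ * ‖a‖ := by rw [norm_mul, hA]; simp
    rw [h2] at this
    simp at this
    nlinarith [norm_nonneg a]
  have hE : ((1 - a^2 * c^2 + c * (1 - (‖a‖:ℂ)^2)) * (1 - A * C)^2)
      + (starRingEnd ℂ) ((1 - a^2 * c^2 + c * (1 - (‖a‖:ℂ)^2)) * (1 - A * C)^2) = 0 := by
    rw [Complex.add_conj, hre]; simp
  have hC : C = c⁻¹ := by
    field_simp
    linear_combination h1
  rw [hC, hK] at hE
  have hA2 : (starRingEnd ℂ) A = a := by rw [hA]; simp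
  have hC2 : (starRingEnd ℂ) (c⁻¹) = c := by
    rw [map_inv₀, ← hCdef, hC]; simp [hc0]
  simp only [map_mul, map_sub, map_add, map_pow, map_one, hA2, hC2, ← hCdef] at hE
  rw [hC] at hE
  field_simp at hE
  simp only [← hA] at hE
  have h2' : c * (1 - a*A) * ((1-a)*c + (1-A))^2 * c^3 = 0 := by
    linear_combination c^3 * hE
  have h2 : c * (1 - a*A) * ((1-a)*c + (1-A))^2 = 0 :=
    (mul_eq_zero.mp h2').resolve_right (pow_ne_zero 3 hc0)
  have h3 : (1-a)*c + (1-A) = 0 := by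
    rcases mul_eq_zero.mp h2 with h | h
    · rcases mul_eq_zero.mp h with h | h
      · exact absurd h hc0
      · exact absurd h haA
    · exact pow_eq_zero_iff (n := 2) (by norm_num) |>.mp h
  field_simp
  linear_combination h3
end

section
/- Let f be holomorphic and injective on the unit disk with convex image, and let z₀ ∈ 𝔻. Then the Koebe transform g(z) = (f(σ(z)) - f(z₀)) / ((1-|z₀|²)f'(z₀)), where σ(z) = (z+z₀)/(1+z̄₀z), is holomorphic and injective on 𝔻 with convex image, g(0)=0, g'(0)=1, and its second Taylor coefficient equals b₂ = (1-|z₀|²)·f''(z₀)/(2f'(z₀)) - z̄₀. -/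
open Complex Metric

lemma mobius_mem_ball (a z : ℂ) (ha : ‖a‖ < 1) (hz : ‖z‖ < 1) :
    ‖(z + a) / (1 + (starRingEnd ℂ) a * z)‖ < 1 := by
  have hden : (1 : ℂ) + (starRingEnd ℂ) a * z ≠ 0 := by
    intro h
    have : ‖(starRingEnd ℂ) a * z‖ = 1 := by
      have : (starRingEnd ℂ) a * z = -1 := by linear_combination h
      simp [this]
    rw [norm_mul, RCLike.norm_conj] at this
    nlinarith [norm_nonneg a, norm_nonneg z]
  have key : Complex.normSq (1 + (starRingEnd ℂ) a * z) - Complex.normSq (z + a)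
      = (1 - Complex.normSq a) * (1 - Complex.normSq z) := by
    simp [Complex.normSq_apply, Complex.add_re, Complex.add_im, Complex.mul_re,
      Complex.mul_im]
    ring
  have hna : Complex.normSq a < 1 := by
    rw [Complex.normSq_eq_norm_sq]; nlinarith [norm_nonneg a]
  have hnz : Complex.normSq z < 1 := by
    rw [Complex.normSq_eq_norm_sq]; nlinarith [norm_nonneg z]
  have hlt : Complex.normSq (z + a) < Complex.normSq (1 + (starRingEnd ℂ) a * z) := by
    nlinarith
  have hpos : (0:ℝ) < ‖1 + (starRingEnd ℂ) a * z‖ := norm_pos_iff.mpr hden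
  rw [norm_div, div_lt_one hpos]
  refine lt_of_pow_lt_pow_left₀ 2 (norm_nonneg _) ?_
  rw [← Complex.sq_norm, ← Complex.sq_norm] at hlt
  simpa using hlt

lemma one_add_conj_mul_ne_zero (a z : ℂ) (ha : ‖a‖ < 1) (hz : ‖z‖ < 1) :
    (1 : ℂ) + (starRingEnd ℂ) a * z ≠ 0 := by
  intro h
  have : ‖(starRingEnd ℂ) a * z‖ = 1 := by
    have : (starRingEnd ℂ) a * z = -1 := by linear_combination h
    simp [this]
  rw [norm_mul, RCLike.norm_conj] at this
  nlinarith [norm_nonneg a, norm_nonneg z]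

theorem koebe_transform_properties
    (f : ℂ → ℂ)
    (hdiff : DifferentiableOn ℂ f (ball (0:ℂ) 1))
    (hinj : Set.InjOn f (ball (0:ℂ) 1))
    (hconv : Convex ℝ (f '' ball (0:ℂ) 1))
    (hder : ∀ z ∈ ball (0:ℂ) 1, deriv f z ≠ 0)
    (z₀ : ℂ) (hz₀ : z₀ ∈ ball (0:ℂ) 1)
    (σ g : ℂ → ℂ)
    (hσ : σ = fun z => (z + z₀) / (1 + (starRingEnd ℂ) z₀ * z))
    (hg : g = fun z => (f (σ z) - f z₀) / ((1 - (‖z₀‖:ℂ)^2) * deriv f z₀)) :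
    DifferentiableOn ℂ g (ball (0:ℂ) 1) ∧
    Set.InjOn g (ball (0:ℂ) 1) ∧
    Convex ℝ (g '' ball (0:ℂ) 1) ∧
    g 0 = 0 ∧ deriv g 0 = 1 ∧
    deriv (deriv g) 0 / 2 =
      (1 - (‖z₀‖:ℂ)^2) * deriv (deriv f) z₀ / (2 * deriv f z₀) - (starRingEnd ℂ) z₀ := by
  set cz : ℂ := (starRingEnd ℂ) z₀ with hcz
  set r : ℂ := (‖z₀‖:ℂ)^2 with hrdef
  have hz0 : ‖z₀‖ < 1 := by simpa [mem_ball, dist_zero_right] using hz₀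
  have hrz : cz * z₀ = r := by
    rw [hcz, hrdef, mul_comm, Complex.mul_conj']
  have hr1 : (1 : ℂ) - r ≠ 0 := by
    rw [hrdef]
    have : ((1 - ‖z₀‖^2 : ℝ) : ℂ) ≠ 0 := by
      rw [Complex.ofReal_ne_zero]; nlinarith [norm_nonneg z₀]
    simpa using this
  have hfz₀ : deriv f z₀ ≠ 0 := hder z₀ hz₀
  set c : ℂ := (1 - r) * deriv f z₀ with hcdef
  have hc : c ≠ 0 := mul_ne_zero hr1 hfz₀
  have hden : ∀ z ∈ ball (0:ℂ) 1, (1 : ℂ) + cz * z ≠ 0 := fun z hzb =>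
    one_add_conj_mul_ne_zero z₀ z hz0 (by simpa [mem_ball, dist_zero_right] using hzb)
  have hσmem : ∀ z ∈ ball (0:ℂ) 1, σ z ∈ ball (0:ℂ) 1 := by
    intro z hzb
    rw [hσ, mem_ball_zero_iff]
    exact mobius_mem_ball z₀ z hz0 (by simpa [mem_ball, dist_zero_right] using hzb)
  have hσ0 : σ 0 = z₀ := by simp [hσ]
  have hσderiv : ∀ z ∈ ball (0:ℂ) 1, HasDerivAt σ ((1 - r) / (1 + cz * z)^2) z := by
    intro z hzb
    have h1 : HasDerivAt (fun w : ℂ => w + z₀) 1 z := (hasDerivAt_id z).add_const z₀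
    have h2 : HasDerivAt (fun w : ℂ => 1 + cz * w) cz z := by
      simpa using ((hasDerivAt_id z).const_mul cz).const_add 1
    have h3 := h1.fun_div h2 (hden z hzb)
    rw [hσ]
    rw [show (1 : ℂ) * (1 + cz * z) - (z + z₀) * cz = 1 - r by rw [← hrz]; ring] at h3
    exact h3
  have hgderiv : ∀ z ∈ ball (0:ℂ) 1,
      HasDerivAt g (deriv f (σ z) * ((1 - r) / (1 + cz * z)^2) / c) z := by
    intro z hzb
    have hf : DifferentiableAt ℂ f (σ z) :=
      hdiff.differentiableAt (isOpen_ball.mem_nhds (hσmem z hzb))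
    have h1 : HasDerivAt (fun w => f (σ w)) (deriv f (σ z) * ((1 - r) / (1 + cz * z)^2)) z :=
      hf.hasDerivAt.comp z (hσderiv z hzb)
    rw [hg]
    exact (h1.sub_const (f z₀)).div_const c
  have hgdiff : DifferentiableOn ℂ g (ball (0:ℂ) 1) := fun z hzb =>
    (hgderiv z hzb).differentiableAt.differentiableWithinAt
  -- injectivity
  have hτσ : ∀ z ∈ ball (0:ℂ) 1, (σ z - z₀) / (1 - cz * σ z) = z := by
    intro z hzb
    have h0 := hden z hzb
    have h1 : (1 : ℂ) - cz * σ z = (1 - r) / (1 + cz * z) := by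
      rw [hσ]
      field_simp
      rw [← hrz]; ring
    have hr1' : (1:ℂ) - cz * z₀ ≠ 0 := by rw [hrz]; exact hr1
    rw [h1, hσ, ← hrz]
    rw [div_sub' h0, div_div_div_cancel_right₀ h0, div_eq_iff hr1']
    ring
  have hσinj : Set.InjOn σ (ball (0:ℂ) 1) := by
    intro a ha b hb h
    have h1 := hτσ a ha
    rw [h, hτσ b hb] at h1
    exact h1.symm
  have hginj : Set.InjOn g (ball (0:ℂ) 1) := by
    intro a ha b hb h
    rw [hg] at h
    simp only at h
    have h2 : f (σ a) = f (σ b) := by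
      field_simp [hc] at h
      linear_combination h
    exact hσinj ha hb (hinj (hσmem a ha) (hσmem b hb) h2)
  -- surjectivity of σ onto the ball
  have hτmem : ∀ w ∈ ball (0:ℂ) 1, (w - z₀) / (1 - cz * w) ∈ ball (0:ℂ) 1 := by
    intro w hw
    rw [mem_ball_zero_iff]
    have h := mobius_mem_ball (-z₀) w (by simpa using hz0) (by simpa [mem_ball, dist_zero_right] using hw)
    have heq : (w - z₀) / (1 - cz * w) = (w + -z₀) / (1 + (starRingEnd ℂ) (-z₀) * w) := by
      rw [map_neg, hcz]; ring_nf
    rw [heq]; exact h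
  have hστ : ∀ w ∈ ball (0:ℂ) 1, σ ((w - z₀) / (1 - cz * w)) = w := by
    intro w hw
    have h0 : (1:ℂ) - cz * w ≠ 0 := by
      have := one_add_conj_mul_ne_zero (-z₀) w (by simpa using hz0)
        (by simpa [mem_ball, dist_zero_right] using hw)
      rw [map_neg] at this
      intro hcon; apply this; linear_combination hcon
    have hr1' : (1:ℂ) - cz * z₀ ≠ 0 := by rw [hrz]; exact hr1
    have h1 : 1 + cz * ((w - z₀) / (1 - cz * w)) = (1 - cz * z₀) / (1 - cz * w) := by
      field_simp
      ring
    rw [hσ]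
    simp only
    rw [h1]
    rw [div_add' _ _ _ h0, div_div_div_cancel_right₀ h0, div_eq_iff hr1']
    ring
  have hσsurj : σ '' ball (0:ℂ) 1 = ball (0:ℂ) 1 := by
    apply Set.Subset.antisymm
    · rintro _ ⟨z, hzb, rfl⟩; exact hσmem z hzb
    · intro w hw; exact ⟨_, hτmem w hw, hστ w hw⟩
  -- convexity
  have hconvg : Convex ℝ (g '' ball (0:ℂ) 1) := by
    have himg : g '' ball (0:ℂ) 1 = (fun w => (w - f z₀) / c) '' (f '' ball (0:ℂ) 1) := by
      conv_rhs => rw [← hσsurj, ← Set.image_comp, ← Set.image_comp]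
      rw [hg]
      rfl
    have h1 := (hconv.translate (-(f z₀))).linear_image ((LinearMap.mul ℝ ℂ) c⁻¹)
    have himg2 : ⇑((LinearMap.mul ℝ ℂ) c⁻¹) '' ((fun x => -f z₀ + x) '' (f '' ball (0:ℂ) 1))
        = (fun w => (w - f z₀) / c) '' (f '' ball (0:ℂ) 1) := by
      rw [Set.image_image]
      apply Set.image_congr'
      intro w
      simp [LinearMap.mul_apply', div_eq_mul_inv]
      ring
    rw [himg, ← himg2]
    exact h1
  -- g 0 = 0
  have hg0 : g 0 = 0 := by rw [hg]; simp [hσ0]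
  -- deriv g 0 = 1
  have h0mem : (0:ℂ) ∈ ball (0:ℂ) 1 := by simp [mem_ball, dist_zero_right]
  have hdg0 : deriv g 0 = 1 := by
    have h := (hgderiv 0 h0mem).deriv
    rw [h, hσ0]
    simp only [mul_zero, add_zero, one_pow, div_one]
    rw [hcdef]
    field_simp
  -- second derivative
  have han : AnalyticOnNhd ℂ f (ball (0:ℂ) 1) := hdiff.analyticOnNhd isOpen_ball
  have hf2 : HasDerivAt (deriv f) (deriv (deriv f) z₀) z₀ :=
    ((han.deriv z₀ hz₀).differentiableAt).hasDerivAt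
  have hdg_eq : deriv g =ᶠ[nhds (0:ℂ)]
      fun z => deriv f (σ z) * ((1 - r) / (1 + cz * z)^2) / c := by
    filter_upwards [isOpen_ball.mem_nhds h0mem] with z hzb
    exact (hgderiv z hzb).deriv
  have h01 : HasDerivAt (fun z => deriv f (σ z)) (deriv (deriv f) z₀ * (1 - r)) 0 := by
    rw [← hσ0] at hf2
    have := hf2.comp 0 (hσderiv 0 h0mem)
    simpa [hσ0, Function.comp_def] using this
  have h02 : HasDerivAt (fun z : ℂ => (1 - r) / (1 + cz * z)^2) (-((1 - r) * (2 * cz))) 0 := by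
    have h2' : HasDerivAt (fun w : ℂ => 1 + cz * w) cz 0 := by
      simpa using ((hasDerivAt_id 0).const_mul cz).const_add 1
    have hd2 : HasDerivAt (fun z : ℂ => (1 + cz * z)^2) (2 * cz) 0 := by
      have := h2'.fun_pow 2
      simpa using this
    have := (hasDerivAt_const (0:ℂ) (1 - r)).fun_div hd2 (by simp)
    simpa using this
  have h03 := ((h01.fun_mul h02).div_const c).deriv
  have hdd : deriv (deriv g) 0 =
      (deriv (deriv f) z₀ * (1 - r) * ((1 - r) / (1 + cz * 0)^2) +
        deriv f (σ 0) * -((1 - r) * (2 * cz))) / c := by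
    rw [hdg_eq.deriv_eq, h03]
  refine ⟨hgdiff, hginj, hconvg, hg0, hdg0, ?_⟩
  rw [hdd, hσ0, hcdef]
  simp only [mul_zero, add_zero, one_pow, div_one]
  field_simp
  ring
end

section
/- Let σ_x(z) = (z+x)/(1+xz) for x ∈ (0,1), let L(z) = (1/2)log((1+z)/(1-z)), a ∈ ℂ, and L₁ = L/(1+aL) (assuming 1+aL ≠ 0 on 𝔻). Then the Koebe transforms g_x(z) = (L₁(σ_x(z)) - L₁(x)) / ((1-x²)·L₁'(x)) converge locally uniformly on the unit disk to L as x → 1⁻. -/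
open Complex Metric Filter

noncomputable def Lc : ℂ → ℂ := fun z => (1/2) * Complex.log ((1 + z) / (1 - z))
noncomputable def L1c (a : ℂ) : ℂ → ℂ := fun z => Lc z / (1 + a * Lc z)

lemma one_sub_ne {z : ℂ} (hz : ‖z‖ < 1) : 1 - z ≠ 0 := by
  intro h
  have : z = 1 := by linear_combination -h
  simp [this] at hz

lemma one_add_ne {z : ℂ} (hz : ‖z‖ < 1) : 1 + z ≠ 0 := by
  intro h
  have : z = -1 := by linear_combination h
  simp [this] at hz

lemma one_sub_sq_ne {z : ℂ} (hz : ‖z‖ < 1) : 1 - z^2 ≠ 0 := by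
  intro h
  have : (1-z)*(1+z) = 0 := by linear_combination h
  rcases mul_eq_zero.1 this with h'|h'
  · exact one_sub_ne hz h'
  · exact one_add_ne hz h'

lemma hasDerivAt_Lc {z : ℂ} (hz : ‖z‖ < 1) : HasDerivAt Lc (1/(1-z^2)) z := by
  have h1 : 1 - z ≠ 0 := one_sub_ne hz
  have h2 : 1 + z ≠ 0 := one_add_ne hz
  have hslit : (1 + z) / (1 - z) ∈ slitPlane := by
    rw [Complex.mem_slitPlane_iff]
    left
    rw [Complex.div_re]
    have hns : Complex.normSq z < 1 := by
      rw [← Complex.sq_norm]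
      have : ‖z‖ < 1 := hz
      nlinarith [norm_nonneg z]
    have h1' : (1+z).re * (1-z).re + (1+z).im * (1-z).im = 1 - Complex.normSq z := by
      simp [Complex.normSq_apply, Complex.add_re, Complex.sub_re]
      ring
    have h2' : 0 < Complex.normSq (1 - z) := by
      rw [Complex.normSq_pos]; exact h1
    rw [← add_div, h1']
    exact div_pos (by linarith) h2'
  have hf : HasDerivAt (fun w : ℂ => (1 + w) / (1 - w)) (2/(1-z)^2) z := by
    have hnum : HasDerivAt (fun w : ℂ => 1 + w) 1 z := by
      simpa using (hasDerivAt_id z).const_add 1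
    have hden : HasDerivAt (fun w : ℂ => 1 - w) (-1) z := by
      simpa using (hasDerivAt_id z).const_sub 1
    have := hnum.div hden h1
    refine this.congr_deriv (Eq.symm ?_)
    field_simp
    ring
  have hlog := (Complex.hasDerivAt_log hslit).comp z hf
  have hsq := one_sub_sq_ne hz
  have := hlog.const_mul (1/2 : ℂ)
  refine this.congr_deriv (Eq.symm ?_)
  rw [div_eq_iff hsq]
  field_simp
  ring

lemma hasDerivAt_L1c {a : ℂ} {z : ℂ} (hz : ‖z‖ < 1) (h : 1 + a * Lc z ≠ 0) :
    HasDerivAt (L1c a) (1/((1-z^2)*(1+a*Lc z)^2)) z := by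
  have hL := hasDerivAt_Lc hz
  have hden : HasDerivAt (fun w => 1 + a * Lc w) (a * (1/(1-z^2))) z :=
    (hL.const_mul a).const_add 1
  have hsq := one_sub_sq_ne hz
  have := hL.div hden h
  refine this.congr_deriv (Eq.symm ?_)
  field_simp
  ring

lemma normSq_lt {z : ℂ} (hz : ‖z‖ < 1) : Complex.normSq z < 1 := by
  rw [← Complex.sq_norm]
  have : ‖z‖ < 1 := hz
  nlinarith [norm_nonneg z]

lemma denom_ne {x : ℝ} (hx : x ∈ Set.Ioo (0:ℝ) 1) {z : ℂ} (hz : ‖z‖ < 1) :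
    1 + (x:ℂ) * z ≠ 0 := by
  intro h
  have h1 : ‖(x:ℂ) * z‖ < 1 := by
    rw [norm_mul, Complex.norm_real, Real.norm_eq_abs]
    have : |x| < 1 := by rw [abs_of_pos hx.1]; exact hx.2
    nlinarith [norm_nonneg z, abs_nonneg x]
  have : (x:ℂ) * z = -1 := by linear_combination h
  simp [this] at h1

lemma sigma_mem {x : ℝ} (hx : x ∈ Set.Ioo (0:ℝ) 1) {z : ℂ} (hz : ‖z‖ < 1) :
    ‖(z + (x:ℂ)) / (1 + (x:ℂ) * z)‖ < 1 := by
  have hd := denom_ne hx hz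
  have hdpos : 0 < ‖1 + (x:ℂ) * z‖ := norm_pos_iff.2 hd
  rw [norm_div, div_lt_one hdpos]
  have key : Complex.normSq (z + (x:ℂ)) < Complex.normSq (1 + (x:ℂ) * z) := by
    have h1 : Complex.normSq (1 + (x:ℂ) * z) - Complex.normSq (z + (x:ℂ))
        = (1 - x^2) * (1 - Complex.normSq z) := by
      simp [Complex.normSq_apply, Complex.add_re, Complex.add_im, Complex.mul_re,
        Complex.mul_im, Complex.ofReal_re, Complex.ofReal_im]
      ring
    have h2 : Complex.normSq z < 1 := normSq_lt hz
    have hx2 : x^2 < 1 := by nlinarith [hx.1, hx.2]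
    nlinarith [Complex.normSq_nonneg z]
  rw [← Complex.sq_norm, ← Complex.sq_norm] at key
  exact lt_of_pow_lt_pow_left₀ 2 (norm_nonneg _) key

lemma Lc_sigma {x : ℝ} (hx : x ∈ Set.Ioo (0:ℝ) 1) {z : ℂ} (hz : ‖z‖ < 1) :
    Lc ((z + (x:ℂ)) / (1 + (x:ℂ) * z)) = Lc z + Lc (x:ℂ) := by
  have hd := denom_ne hx hz
  have h1z : (1:ℂ) - z ≠ 0 := one_sub_ne hz
  have h2z : (1:ℂ) + z ≠ 0 := one_add_ne hz
  have hr : (0:ℝ) < (1 + x) / (1 - x) := by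
    apply div_pos <;> [linarith [hx.1]; linarith [hx.2]]
  have halg : (1 + (z + (x:ℂ)) / (1 + (x:ℂ) * z)) / (1 - (z + (x:ℂ)) / (1 + (x:ℂ) * z))
      = ((((1+x)/(1-x) : ℝ)) : ℂ) * ((1 + z) / (1 - z)) := by
    have hx1 : ((1:ℝ) - x : ℂ) ≠ 0 := by
      simp only [← Complex.ofReal_one, ← Complex.ofReal_sub, Ne, Complex.ofReal_eq_zero]
      linarith [hx.2]
    rw [one_add_div hd, one_sub_div hd, div_div_div_cancel_right₀ hd]
    have hq : 1 + (x:ℂ) * z - (z + x) = (1 - x) * (1 - z) := by ring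
    rw [hq]
    have hx1' : (1:ℂ) - x ≠ 0 := by simpa using hx1
    push_cast
    field_simp
    ring
  have hw : (1 + z) / (1 - z) ≠ 0 := div_ne_zero h2z h1z
  have hlogs : Complex.log ((1 + (z + (x:ℂ)) / (1 + (x:ℂ) * z)) / (1 - (z + (x:ℂ)) / (1 + (x:ℂ) * z)))
      = Complex.log ((1 + (x:ℂ)) / (1 - (x:ℂ))) + Complex.log ((1 + z) / (1 - z)) := by
    rw [halg, Complex.log_ofReal_mul hr hw, Complex.ofReal_log (le_of_lt hr)]
    congr 1
    push_cast
    rfl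
  unfold Lc
  rw [hlogs]
  ring

lemma Lc_real {x : ℝ} (hx : x ∈ Set.Ioo (0:ℝ) 1) :
    Lc (x:ℂ) = (((1/2) * Real.log ((1+x)/(1-x)) : ℝ) : ℂ) := by
  have hr : (0:ℝ) < (1 + x) / (1 - x) := by
    apply div_pos <;> [linarith [hx.1]; linarith [hx.2]]
  unfold Lc
  have h1 : ((1:ℂ) + (x:ℂ)) / (1 - (x:ℂ)) = (((1+x)/(1-x) : ℝ) : ℂ) := by push_cast; ring
  rw [h1, ← Complex.ofReal_log (le_of_lt hr)]
  push_cast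
  ring

lemma xc_mem {x : ℝ} (hx : x ∈ Set.Ioo (0:ℝ) 1) : ‖(x:ℂ)‖ < 1 := by
  rw [Complex.norm_real, Real.norm_eq_abs, abs_of_pos hx.1]
  exact hx.2

set_option maxHeartbeats 1600000 in
theorem koebe_transforms_of_L1_tend_to_L
    (L L₁ : ℂ → ℂ)
    (hL : L = fun z => (1/2) * Complex.log ((1 + z) / (1 - z)))
    (a : ℂ)
    (hne : ∀ z ∈ ball (0:ℂ) 1, 1 + a * L z ≠ 0)
    (hL₁ : L₁ = fun z => L z / (1 + a * L z))
    (g : ℝ → ℂ → ℂ)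
    (hg : ∀ x ∈ Set.Ioo (0:ℝ) 1, ∀ z : ℂ,
      g x z = (L₁ ((z + x) / (1 + x * z)) - L₁ x) / ((1 - (x:ℂ)^2) * deriv L₁ x)) :
    TendstoLocallyUniformlyOn g L (nhdsWithin 1 (Set.Iio (1:ℝ))) (ball (0:ℂ) 1) := by
  have hLc : L = Lc := by rw [hL]; rfl
  have hL1c : L₁ = L1c a := by rw [hL₁, hLc]; rfl
  subst hLc
  subst hL1c
  -- restate hne with norm
  have hne' : ∀ z : ℂ, ‖z‖ < 1 → 1 + a * Lc z ≠ 0 := by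
    intro z hz
    exact hne z (by simpa [mem_ball, dist_eq_norm] using hz)
  -- key identity for g
  have hgkey : ∀ x ∈ Set.Ioo (0:ℝ) 1, ∀ z : ℂ, ‖z‖ < 1 →
      g x z = Lc z * (1 + a * Lc (x:ℂ)) / ((1 + a * Lc (x:ℂ)) + a * Lc z) := by
    intro x hx z hz
    have hxball := xc_mem hx
    have hc : 1 + a * Lc (x:ℂ) ≠ 0 := hne' _ hxball
    have hσ := sigma_mem hx hz
    have hDσ : 1 + a * Lc ((z + (x:ℂ)) / (1 + (x:ℂ) * z)) ≠ 0 := hne' _ hσ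
    have hD : (1 + a * Lc (x:ℂ)) + a * Lc z ≠ 0 := by
      rw [Lc_sigma hx hz] at hDσ
      intro h
      exact hDσ (by linear_combination h)
    have hderiv : deriv (L1c a) (x:ℂ) = 1/((1-(x:ℂ)^2)*(1 + a * Lc (x:ℂ))^2) :=
      (hasDerivAt_L1c hxball hc).deriv
    have hsqx : 1 - (x:ℂ)^2 ≠ 0 := one_sub_sq_ne hxball
    rw [hg x hx z, hderiv]
    unfold L1c
    rw [Lc_sigma hx hz]
    have hDσ' : 1 + a * (Lc z + Lc (x:ℂ)) ≠ 0 := by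
      intro h; exact hD (by linear_combination h)
    have hc' : 1 + Lc (x:ℂ) * a ≠ 0 := by rwa [mul_comm]
    have hD' : 1 + Lc z * a + Lc (x:ℂ) * a ≠ 0 := by
      intro h; exact hD (by linear_combination h)
    rw [div_sub_div _ _ hDσ' hc]
    field_simp
    ring
  -- main convergence
  rw [Metric.tendstoLocallyUniformlyOn_iff]
  intro ε hε z₀ hz₀
  rw [mem_ball, dist_eq_norm, sub_zero] at hz₀
  set r : ℝ := (1 - ‖z₀‖)/2 with hr
  have hrpos : 0 < r := by simp only [hr]; linarith
  have hsub : closedBall z₀ r ⊆ ball (0:ℂ) 1 := by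
    intro y hy
    rw [mem_closedBall, dist_eq_norm] at hy
    rw [mem_ball, dist_eq_norm, sub_zero]
    calc ‖y‖ = ‖(y - z₀) + z₀‖ := by rw [sub_add_cancel]
    _ ≤ ‖y - z₀‖ + ‖z₀‖ := norm_add_le _ _
    _ ≤ r + ‖z₀‖ := by linarith
    _ < 1 := by simp only [hr]; linarith
  refine ⟨closedBall z₀ r ∩ ball (0:ℂ) 1,
    Filter.inter_mem (mem_nhdsWithin_of_mem_nhds (closedBall_mem_nhds _ hrpos))
      self_mem_nhdsWithin, ?_⟩
  -- bound on Lc over the closed ball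
  have hcont : ContinuousOn Lc (closedBall z₀ r) := by
    intro y hy
    exact ((hasDerivAt_Lc (by
      have := hsub hy
      rwa [mem_ball, dist_eq_norm, sub_zero] at this)).differentiableAt.continuousAt).continuousWithinAt
  obtain ⟨M₀, hM₀⟩ := (isCompact_closedBall z₀ r).exists_bound_of_continuousOn hcont
  set M : ℝ := max M₀ 1 with hM
  have hM1 : (1:ℝ) ≤ M := le_max_right _ _
  have hMpos : 0 < M := lt_of_lt_of_le one_pos hM1
  have hMb : ∀ y ∈ closedBall z₀ r, ‖Lc y‖ ≤ M := fun y hy =>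
    le_trans (hM₀ y hy) (le_max_left _ _)
  have hIoo : Set.Ioo (0:ℝ) 1 ∈ nhdsWithin (1:ℝ) (Set.Iio 1) :=
    Ioo_mem_nhdsLT_of_mem (by constructor <;> norm_num)
  by_cases ha : a = 0
  · -- trivial case
    filter_upwards [hIoo] with x hx
    intro y hy
    have hyb : ‖y‖ < 1 := by
      have := hy.2; rwa [mem_ball, dist_eq_norm, sub_zero] at this
    have hgy : g x y = Lc y := by
      rw [hgkey x hx y hyb, ha]
      simp
    rw [hgy, dist_self]
    exact hε
  · -- a ≠ 0 : the scaling factor tends to 1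
    have hanorm : 0 < ‖a‖ := norm_pos_iff.2 ha
    -- tendsto of ‖1 + a * Lc x‖ to atTop
    have hφ : Tendsto (fun x : ℝ => (1/2) * Real.log ((1+x)/(1-x)))
        (nhdsWithin 1 (Set.Iio 1)) atTop := by
      have h1 : Tendsto (fun x : ℝ => 1 - x) (nhdsWithin 1 (Set.Iio 1))
          (nhdsWithin 0 (Set.Ioi 0)) := by
        apply tendsto_nhdsWithin_of_tendsto_nhds_of_eventually_within
        · have hc : Continuous (fun x : ℝ => 1 - x) := continuous_const.sub continuous_id
          have h0 : Tendsto (fun x : ℝ => 1 - x) (nhds 1) (nhds 0) := by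
            have := hc.tendsto 1
            norm_num at this
            exact this
          exact h0.mono_left nhdsWithin_le_nhds
        · filter_upwards [self_mem_nhdsWithin] with x hx
          simp only [Set.mem_Iio] at hx
          simp only [Set.mem_Ioi]
          linarith
      have h2 : Tendsto (fun x : ℝ => (1 - x)⁻¹) (nhdsWithin 1 (Set.Iio 1)) atTop :=
        tendsto_inv_nhdsGT_zero.comp h1
      have h3 : Tendsto (fun x : ℝ => 1 + x) (nhdsWithin 1 (Set.Iio 1)) (nhds 2) := by
        have hc : Continuous (fun x : ℝ => 1 + x) := continuous_const.add continuous_id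
        have h2 : Tendsto (fun x : ℝ => 1 + x) (nhds 1) (nhds 2) := by
          have := hc.tendsto 1
          norm_num at this
          exact this
        exact h2.mono_left nhdsWithin_le_nhds
      have h4 : Tendsto (fun x : ℝ => (1+x) * (1-x)⁻¹) (nhdsWithin 1 (Set.Iio 1)) atTop :=
        h3.pos_mul_atTop two_pos h2
      have h5 : Tendsto (fun x : ℝ => Real.log ((1+x)/(1-x))) (nhdsWithin 1 (Set.Iio 1)) atTop := by
        simp only [div_eq_mul_inv]
        exact Real.tendsto_log_atTop.comp h4
      exact h5.const_mul_atTop one_half_pos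
    have hcnorm : Tendsto (fun x : ℝ => ‖1 + a * Lc (x:ℂ)‖) (nhdsWithin 1 (Set.Iio 1)) atTop := by
      have hbase : Tendsto (fun x : ℝ => ‖a‖ * ((1/2) * Real.log ((1+x)/(1-x))) - 1)
          (nhdsWithin 1 (Set.Iio 1)) atTop := by
        simpa [sub_eq_add_neg] using
          tendsto_atTop_add_const_right (nhdsWithin (1:ℝ) (Set.Iio 1)) (-1)
            (hφ.const_mul_atTop hanorm)
      refine tendsto_atTop_mono' _ ?_ hbase
      filter_upwards [hIoo] with x hx
      have hLx := Lc_real hx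
      have hφpos : 0 ≤ (1/2) * Real.log ((1+x)/(1-x)) := by
        have h1 : (1:ℝ) ≤ (1+x)/(1-x) := by
          rw [le_div_iff₀ (by linarith [hx.2])]
          linarith [hx.1]
        have := Real.log_nonneg h1
        linarith
      have hwnorm : ‖a * Lc (x:ℂ)‖ = ‖a‖ * ((1/2) * Real.log ((1+x)/(1-x))) := by
        rw [norm_mul, hLx, Complex.norm_real, Real.norm_eq_abs, _root_.abs_of_nonneg hφpos]
      have : ‖a * Lc (x:ℂ)‖ ≤ ‖1 + a * Lc (x:ℂ)‖ + 1 := by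
        have heq : a * Lc (x:ℂ) = (1 + a * Lc (x:ℂ)) - 1 := by ring
        calc ‖a * Lc (x:ℂ)‖ = ‖(1 + a * Lc (x:ℂ)) - 1‖ := by rw [← heq]
        _ ≤ ‖1 + a * Lc (x:ℂ)‖ + ‖(1:ℂ)‖ := norm_sub_le _ _
        _ = ‖1 + a * Lc (x:ℂ)‖ + 1 := by norm_num
      rw [hwnorm] at this
      linarith
    set C : ℝ := ‖a‖ * M + ‖a‖ * M^2 / ε + 1 with hC
    filter_upwards [hIoo, hcnorm.eventually_gt_atTop C] with x hx hCx
    intro y hy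
    have hyb : ‖y‖ < 1 := by
      have := hy.2; rwa [mem_ball, dist_eq_norm, sub_zero] at this
    have hu : ‖Lc y‖ ≤ M := hMb y hy.1
    set c : ℂ := 1 + a * Lc (x:ℂ) with hc
    set w : ℂ := a * Lc y with hw
    have hD : c + w ≠ 0 := by
      have hDσ := hne' _ (sigma_mem hx hyb)
      rw [Lc_sigma hx hyb] at hDσ
      intro h
      exact hDσ (by rw [hc, hw] at h; linear_combination h)
    have hgy : g x y = Lc y * c / (c + w) := hgkey x hx y hyb
    have hdiff : Lc y - g x y = Lc y * w / (c + w) := by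
      rw [hgy]
      field_simp
      ring
    rw [dist_eq_norm, hdiff, norm_div, norm_mul]
    have hwnorm : ‖w‖ ≤ ‖a‖ * M := by
      rw [hw, norm_mul]
      exact mul_le_mul_of_nonneg_left hu (norm_nonneg a)
    have hden : ‖a‖ * M^2 / ε + 1 < ‖c + w‖ := by
      have h1 : ‖c‖ ≤ ‖c + w‖ + ‖w‖ := by
        have heq : c = (c + w) - w := by ring
        calc ‖c‖ = ‖(c + w) - w‖ := by rw [← heq]
        _ ≤ ‖c + w‖ + ‖w‖ := norm_sub_le _ _
      have := hCx
      rw [hC] at this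
      linarith
    have hdenpos : 0 < ‖c + w‖ := by
      have : 0 ≤ ‖a‖ * M^2 / ε := by positivity
      linarith
    rw [div_lt_iff₀ hdenpos]
    have hP : 0 < ‖a‖ * M^2 := by positivity
    have key : ε * ‖c + w‖ > ‖a‖ * M^2 + ε := by
      have h2 : ε * (‖a‖ * M^2 / ε + 1) = ‖a‖ * M^2 + ε := by
        field_simp
      nlinarith [hε, hden]
    nlinarith [norm_nonneg (Lc y), norm_nonneg w, hu, hwnorm, hMpos]
end
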